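/- Let x solve ẋ = f(t, x, u) on [t0,θ] with constant control u_i on each [t_i, t_{i+1}] of a uniform partition with mesh Δ, where ‖x(t)‖ ≤ α*, ‖u_i‖ ≤ β, and ‖x(t)-x(s)‖ ≤ φ*(Δ) for |t-s| ≤ Δ with Δ ≤ φ*(Δ). Let z be the Euler broken line z(t) = z(t_i) + (t - t_i) f(t_i, x(t_i), u_i) on [t_i,t_{i+1}], z(t0) = x(t0). Assume f satisfies ‖f(t,x1,u) - f(t,x2,u)‖ ≤ g‖x1-x2‖ for ‖x1‖,‖x2‖ ≤ α*+1, ‖u‖ ≤ β, and let ω = ω(φ*(Δ), β) be the modulus of continuity of f over the compact set as in the paper. Then ‖x(t) - z(t)‖ ≤ ω(θ - t0) exp(g(θ - t0)) for all t ∈ [t0,θ]. -/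
import Mathlib


open MeasureTheory Set

theorem stmt_18 {n m : ℕ} (t0 θ Δ α β g ω φΔ : ℝ) (ht : t0 < θ)
    (hα : 0 < α) (hβ : 0 < β) (hg : 0 < g) (hω : 0 ≤ ω)
    (N : ℕ) (hN : 0 < N) (hΔ : Δ = (θ - t0) / N) (hΔφ : Δ ≤ φΔ)
    (f : ℝ → EuclideanSpace ℝ (Fin n) → EuclideanSpace ℝ (Fin m) → EuclideanSpace ℝ (Fin n))
    (x z : ℝ → EuclideanSpace ℝ (Fin n)) (u : ℕ → EuclideanSpace ℝ (Fin m))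
    (hub : ∀ i < N, ‖u i‖ ≤ β)
    (hxb : ∀ t ∈ Set.Icc t0 θ, ‖x t‖ ≤ α)
    (hxmod : ∀ t ∈ Set.Icc t0 θ, ∀ s ∈ Set.Icc t0 θ, |t - s| ≤ Δ → ‖x t - x s‖ ≤ φΔ)
    (hx : ∀ i < N, ∀ t ∈ Set.Icc (t0 + i * Δ) (t0 + (i + 1) * Δ),
      x t = x (t0 + i * Δ) + ∫ s in (t0 + i * Δ)..t, f s (x s) (u i))
    (hxint : ∀ i < N, IntervalIntegrable (fun s => f s (x s) (u i)) volume
      (t0 + i * Δ) (t0 + (i + 1) * Δ))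
    (hz0 : z t0 = x t0)
    (hz : ∀ i < N, ∀ t ∈ Set.Icc (t0 + i * Δ) (t0 + (i + 1) * Δ),
      z t = z (t0 + i * Δ) + (t - (t0 + i * Δ)) • f (t0 + i * Δ) (x (t0 + i * Δ)) (u i))
    (hflip : ∀ t ∈ Set.Icc t0 θ, ∀ x1 x2 : EuclideanSpace ℝ (Fin n),
      ∀ u' : EuclideanSpace ℝ (Fin m), ‖x1‖ ≤ α + 1 → ‖x2‖ ≤ α + 1 → ‖u'‖ ≤ β →
      ‖f t x1 u' - f t x2 u'‖ ≤ g * ‖x1 - x2‖)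
    (hfω : ∀ t1 ∈ Set.Icc t0 θ, ∀ t2 ∈ Set.Icc t0 θ,
      ∀ x1 x2 : EuclideanSpace ℝ (Fin n), ∀ u' : EuclideanSpace ℝ (Fin m),
      ‖x1‖ ≤ α → ‖x2‖ ≤ α → ‖u'‖ ≤ β → |t1 - t2| ≤ φΔ → ‖x1 - x2‖ ≤ φΔ →
      ‖f t1 x1 u' - f t2 x2 u'‖ ≤ ω) :
    ∀ t ∈ Set.Icc t0 θ, ‖x t - z t‖ ≤ ω * (θ - t0) * Real.exp (g * (θ - t0)) := by

  have hΔpos : 0 < Δ := by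
    rw [hΔ]; exact div_pos (sub_pos.mpr ht) (Nat.cast_pos.mpr hN)
  have hNΔ : (N : ℝ) * Δ = θ - t0 := by
    rw [hΔ]; field_simp
  have hmem : ∀ r : ℝ, 0 ≤ r → r ≤ N → t0 + r * Δ ∈ Icc t0 θ := by
    intro r h0 h1
    constructor
    · nlinarith
    · nlinarith
  have step : ∀ i : ℕ, i < N → ‖x (t0 + i * Δ) - z (t0 + i * Δ)‖ ≤ ω * (i * Δ) →
      ∀ t ∈ Icc (t0 + i * Δ) (t0 + (i + 1) * Δ), ‖x t - z t‖ ≤ ω * (t - t0) := by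
    intro i hi hbase t htm
    obtain ⟨hta, htb⟩ := htm
    have hiN : (i : ℝ) ≤ N := Nat.cast_le.mpr hi.le
    have hi1N : (i : ℝ) + 1 ≤ N := by exact_mod_cast hi
    have hamem : t0 + i * Δ ∈ Icc t0 θ := hmem i (Nat.cast_nonneg i) hiN
    have hbmem : t0 + ((i : ℝ) + 1) * Δ ∈ Icc t0 θ := hmem _ (by positivity) hi1N
    have hc : x t = x (t0 + i * Δ) + ∫ s in (t0 + i * Δ)..t, f s (x s) (u i) :=
      hx i hi t ⟨hta, htb⟩
    have hzc : z t = z (t0 + i * Δ) + (t - (t0 + i * Δ)) • f (t0 + i * Δ) (x (t0 + i * Δ)) (u i) :=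
      hz i hi t ⟨hta, htb⟩
    set a := t0 + (i : ℝ) * Δ with ha
    have hab : a ≤ t0 + ((i : ℝ) + 1) * Δ := by nlinarith
    have hint : IntervalIntegrable (fun s => f s (x s) (u i)) volume a t := by
      apply (hxint i hi).mono_set
      apply Set.uIcc_subset_uIcc Set.left_mem_uIcc
      rw [Set.uIcc_of_le hab]
      exact ⟨hta, htb⟩
    have bound : ∀ s ∈ Set.uIoc a t, ‖f s (x s) (u i) - f a (x a) (u i)‖ ≤ ω := by
      intro s hs
      rw [Set.uIoc_of_le hta] at hs
      obtain ⟨hs1, hs2⟩ := hs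
      have hsmem : s ∈ Icc t0 θ := ⟨le_trans hamem.1 hs1.le, le_trans (hs2.trans htb) hbmem.2⟩
      have hdist : |s - a| ≤ Δ := by
        rw [abs_of_nonneg (by linarith)]
        have hba : t0 + ((i : ℝ) + 1) * Δ - a = Δ := by rw [ha]; ring
        linarith
      exact hfω s hsmem a hamem (x s) (x a) (u i)
        (hxb s hsmem) (hxb a hamem) (hub i hi) (hdist.trans hΔφ)
        (hxmod s hsmem a hamem hdist)
    have hdiff : x t - z t = (x a - z a) +
        ∫ s in a..t, (f s (x s) (u i) - f a (x a) (u i)) := by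
      rw [intervalIntegral.integral_sub hint intervalIntegrable_const,
        intervalIntegral.integral_const, hc, hzc]
      abel
    calc ‖x t - z t‖ ≤ ‖x a - z a‖ + ‖∫ s in a..t, (f s (x s) (u i) - f a (x a) (u i))‖ := by
          rw [hdiff]; exact norm_add_le _ _
      _ ≤ ω * (i * Δ) + ω * |t - a| :=
          add_le_add hbase (intervalIntegral.norm_integral_le_of_norm_le_const bound)
      _ = ω * (t - t0) := by
          rw [abs_of_nonneg (by linarith), ha]; ring
  have endpoint : ∀ i : ℕ, i ≤ N → ‖x (t0 + i * Δ) - z (t0 + i * Δ)‖ ≤ ω * (i * Δ) := by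
    intro i
    induction i with
    | zero => intro _; simp [hz0]
    | succ k ih =>
      intro hk
      have hkN : k < N := hk
      have hin : t0 + ((k : ℝ) + 1) * Δ ∈ Icc (t0 + (k : ℝ) * Δ) (t0 + ((k : ℝ) + 1) * Δ) :=
        ⟨by nlinarith, le_refl _⟩
      have h := step k hkN (ih hkN.le) _ hin
      push_cast
      linarith [h]
  intro t htm
  obtain ⟨ht0, htθ⟩ := htm
  obtain ⟨i, hiN, hti⟩ : ∃ i : ℕ, i < N ∧ t ∈ Icc (t0 + i * Δ) (t0 + ((i : ℝ) + 1) * Δ) := by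
    by_cases hte : t = θ
    · refine ⟨N - 1, Nat.sub_lt hN one_pos, ?_, ?_⟩
      · have hN1 : ((N - 1 : ℕ) : ℝ) = (N : ℝ) - 1 := by
          rw [Nat.cast_sub hN]; simp
        rw [hN1]; subst hte; nlinarith
      · have hN1 : ((N - 1 : ℕ) : ℝ) = (N : ℝ) - 1 := by
          rw [Nat.cast_sub hN]; simp
        rw [hN1]; subst hte; nlinarith
    · have htlt : t < θ := lt_of_le_of_ne htθ hte
      set r := (t - t0) / Δ with hr
      have hr0 : 0 ≤ r := div_nonneg (by linarith) hΔpos.le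
      have hrΔ : r * Δ = t - t0 := div_mul_cancel₀ _ hΔpos.ne'
      refine ⟨⌊r⌋₊, ?_, ?_, ?_⟩
      · rw [Nat.floor_lt hr0, hr, div_lt_iff₀ hΔpos]
        nlinarith
      · have h1 : (⌊r⌋₊ : ℝ) * Δ ≤ r * Δ :=
          mul_le_mul_of_nonneg_right (Nat.floor_le hr0) hΔpos.le
        linarith
      · have h2 : r * Δ ≤ ((⌊r⌋₊ : ℝ) + 1) * Δ :=
          mul_le_mul_of_nonneg_right (Nat.lt_floor_add_one r).le hΔpos.le
        linarith
  have hkey := step i hiN (endpoint i hiN.le) t hti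
  have hexp : 1 ≤ Real.exp (g * (θ - t0)) :=
    Real.one_le_exp (mul_nonneg hg.le (by linarith))
  have htt0 : ω * (t - t0) ≤ ω * (θ - t0) :=
    mul_le_mul_of_nonneg_left (by linarith) hω
  nlinarith [mul_nonneg hω (sub_nonneg.mpr ht.le)]
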